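/- For every s > 0 and every z ∈ (0,1), ∫₁^∞ (1 − 1/(1 + s·x^{−1/z})) dx = s^z · ( πz/sin(πz) − ∫₀^{s^{−z}} dt/(1 + t^{1/z}) ); that is, the integral equals ℓ(s, z). -/

import Mathlib

open MeasureTheory Set
open Real

/-- Real Beta integral at `(z, 1-z)`. -/
lemma beta_eval {z : ℝ} (h1 : 0 < z) (h2 : z < 1) :
    ∫ x in Ioo (0:ℝ) 1, x ^ (z-1) * (1-x) ^ (-z) = π / Real.sin (π * z) := by
  have hre1 : 0 < Complex.re (z : ℂ) := by simpa using h1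
  have hre2 : 0 < Complex.re (1 - (z : ℂ)) := by simp [Complex.sub_re]; linarith
  have hB := Complex.Gamma_mul_Gamma_eq_betaIntegral hre1 hre2
  rw [show (z : ℂ) + (1 - z) = 1 by ring, Complex.Gamma_one, one_mul,
    Complex.Gamma_mul_Gamma_one_sub] at hB
  rw [Complex.betaIntegral] at hB
  have hEq : ∀ x ∈ Set.uIcc (0:ℝ) 1,
      ((x:ℂ) ^ ((z:ℂ) - 1) * ((1:ℂ) - x) ^ ((1 - (z:ℂ)) - 1)
        = ((x ^ (z-1) * (1-x) ^ (-z) : ℝ) : ℂ)) := by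
    intro x hx
    rw [Set.uIcc_of_le zero_le_one] at hx
    rw [show ((z:ℂ) - 1) = ((z - 1 : ℝ) : ℂ) by push_cast; ring,
      show ((1 - (z:ℂ)) - 1) = ((-z : ℝ) : ℂ) by push_cast; ring,
      show ((1:ℂ) - x) = ((1 - x : ℝ) : ℂ) by push_cast; ring,
      ← Complex.ofReal_cpow hx.1, ← Complex.ofReal_cpow (by linarith [hx.2] : (0:ℝ) ≤ 1 - x),
      ← Complex.ofReal_mul]
  rw [intervalIntegral.integral_congr hEq, intervalIntegral.integral_ofReal] at hB
  have : ((π / Real.sin (π * z) : ℝ) : ℂ) = ↑π / Complex.sin (↑π * ↑z) := by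
    push_cast [Complex.ofReal_sin]; ring_nf
  rw [← this] at hB
  have hreal : ∫ x in (0:ℝ)..1, x ^ (z-1) * (1-x) ^ (-z) = π / Real.sin (π * z) :=
    Complex.ofReal_inj.mp hB.symm
  rw [intervalIntegral.integral_of_le zero_le_one, integral_Ioc_eq_integral_Ioo] at hreal
  exact hreal

lemma mellin_one_add {z : ℝ} (h1 : 0 < z) (h2 : z < 1) :
    ∫ t in Ioi (0:ℝ), t ^ (z-1) / (1+t) = π / Real.sin (π * z) := by
  have himg : (fun x : ℝ => x / (1-x)) '' Ioo 0 1 = Ioi 0 := by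
    ext t
    constructor
    · rintro ⟨x, hx, rfl⟩
      exact div_pos hx.1 (by linarith [hx.2])
    · intro ht
      have ht' : (0:ℝ) < t := ht
      refine ⟨t / (1+t), ⟨div_pos ht' (by linarith), (div_lt_one (by linarith)).2 (by linarith)⟩, ?_⟩
      field_simp
      ring
  have hderiv : ∀ x ∈ Ioo (0:ℝ) 1,
      HasDerivWithinAt (fun x : ℝ => x / (1-x)) (((1-x)^2)⁻¹) (Ioo 0 1) x := by
    intro x hx
    have hne : (1:ℝ) - x ≠ 0 := by have := hx.2; intro h; linarith [sub_eq_zero.mp h]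
    have := (hasDerivAt_id x).div ((hasDerivAt_const x (1:ℝ)).sub (hasDerivAt_id x)) hne
    refine this.hasDerivWithinAt.congr_deriv ?_
    simp only [Pi.sub_apply, id_eq]
    rw [div_eq_mul_inv]; ring
  have hinj : InjOn (fun x : ℝ => x / (1-x)) (Ioo 0 1) := by
    intro a ha b hb h
    have hna : (1:ℝ) - a ≠ 0 := by have := ha.2; intro hh; linarith [sub_eq_zero.mp hh]
    have hnb : (1:ℝ) - b ≠ 0 := by have := hb.2; intro hh; linarith [sub_eq_zero.mp hh]
    field_simp at h
    nlinarith [h]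
  have key := integral_image_eq_integral_abs_deriv_smul measurableSet_Ioo hderiv hinj
    (fun t : ℝ => t ^ (z-1) / (1+t))
  rw [himg] at key
  rw [key, ← beta_eval h1 h2]
  refine setIntegral_congr_fun measurableSet_Ioo (fun x hx => ?_)
  have hx0 : 0 < x := hx.1
  have hu : 0 < 1 - x := by linarith [hx.2]
  have h1x : 1 + x / (1-x) = (1-x)⁻¹ := by field_simp; ring
  have hrp : (x / (1-x)) ^ (z-1) = x ^ (z-1) / (1-x) ^ (z-1) :=
    Real.div_rpow hx0.le hu.le _
  simp only [smul_eq_mul, h1x, hrp]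
  rw [abs_of_pos (by positivity), Real.rpow_sub hu, Real.rpow_neg hu.le,
    Real.rpow_sub hx0, Real.rpow_one, Real.rpow_one]
  have hxz : (0:ℝ) < x ^ z := Real.rpow_pos_of_pos hx0 z
  have huz : (0:ℝ) < (1-x) ^ z := Real.rpow_pos_of_pos hu z
  field_simp

lemma int_one_add_rpow {z : ℝ} (h1 : 0 < z) (h2 : z < 1) :
    ∫ t in Ioi (0:ℝ), 1 / (1 + t ^ (1/z)) = π * z / Real.sin (π * z) := by
  have key := integral_comp_rpow_Ioi (fun t : ℝ => 1 / (1 + t ^ (1/z))) h1.ne'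
  rw [← key]
  have : ∀ x ∈ Ioi (0:ℝ),
      (|z| * x ^ (z-1)) • (1 / (1 + (x ^ z) ^ (1/z))) = z * (x ^ (z-1) / (1+x)) := by
    intro x hx
    have hx0 : (0:ℝ) < x := hx
    rw [← Real.rpow_mul hx0.le, mul_one_div, div_self h1.ne', Real.rpow_one,
      abs_of_pos h1, smul_eq_mul]
    ring
  rw [setIntegral_congr_fun measurableSet_Ioi this, integral_const_mul,
    mellin_one_add h1 h2]
  ring

lemma f_meas {z : ℝ} : Measurable (fun t : ℝ => 1 / (1 + t ^ (1/z))) := by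
  fun_prop

lemma f_int_Ioc {z : ℝ} (a : ℝ) :
    IntegrableOn (fun t : ℝ => 1 / (1 + t ^ (1/z))) (Ioc 0 a) := by
  refine Integrable.mono' (integrable_const (1:ℝ)) f_meas.aestronglyMeasurable ?_
  refine (ae_restrict_iff' measurableSet_Ioc).2 (Filter.Eventually.of_forall fun t ht => ?_)
  have h0 : (0:ℝ) ≤ t ^ (1/z) := Real.rpow_nonneg ht.1.le _
  rw [Real.norm_eq_abs, abs_of_nonneg (by positivity), div_le_one (by linarith)]
  linarith

lemma f_int_Ioi {z : ℝ} (h1 : 0 < z) (h2 : z < 1) {a : ℝ} (ha : 0 < a) :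
    IntegrableOn (fun t : ℝ => 1 / (1 + t ^ (1/z))) (Ioi a) := by
  have hz1 : 1 < 1/z := (one_lt_div h1).2 h2
  refine Integrable.mono' (integrableOn_Ioi_rpow_of_lt (by linarith : -(1/z) < -1) ha)
    f_meas.aestronglyMeasurable ?_
  refine (ae_restrict_iff' measurableSet_Ioi).2 (Filter.Eventually.of_forall fun t ht => ?_)
  have ht0 : (0:ℝ) < t := lt_trans ha ht
  have h0 : (0:ℝ) < t ^ (1/z) := Real.rpow_pos_of_pos ht0 _
  rw [Real.norm_eq_abs, abs_of_nonneg (by positivity), Real.rpow_neg ht0.le, ← one_div,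
    div_le_div_iff₀ (by linarith) h0]
  nlinarith

lemma f_split {z : ℝ} (h1 : 0 < z) (h2 : z < 1) {a : ℝ} (ha : 0 < a) :
    ∫ t in Ioi (0:ℝ), 1 / (1 + t ^ (1/z)) =
      (∫ t in Ioc (0:ℝ) a, 1 / (1 + t ^ (1/z))) + ∫ t in Ioi a, 1 / (1 + t ^ (1/z)) := by
  rw [← Ioc_union_Ioi_eq_Ioi ha.le]
  exact setIntegral_union (Ioc_disjoint_Ioi le_rfl) measurableSet_Ioi
    (f_int_Ioc a) (f_int_Ioi h1 h2 ha)

/-- For every `s > 0` and every `z ∈ (0,1)`,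
`∫₁^∞ (1 − 1/(1 + s·x^{−1/z})) dx = s^z·(πz/sin(πz) − ∫₀^{s^{−z}} dt/(1 + t^{1/z}))`,
i.e. the integral equals `ℓ(s, z)`. -/
theorem ell_integral_representation (s z : ℝ) (hs : 0 < s) (hz : z ∈ Set.Ioo (0 : ℝ) 1) :
    ∫ x in Ioi (1 : ℝ), (1 - 1 / (1 + s * x ^ (-(1 / z)))) =
      s ^ z * (Real.pi * z / Real.sin (Real.pi * z) -
        ∫ t in Ioc (0 : ℝ) (s ^ (-z)), 1 / (1 + t ^ (1 / z))) := by
  obtain ⟨h1, h2⟩ := hz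
  have hsz : (0:ℝ) < s ^ z := Real.rpow_pos_of_pos hs z
  have hsz' : (0:ℝ) < s ^ (-z) := Real.rpow_pos_of_pos hs (-z)
  have hscale := integral_comp_mul_left_Ioi
    (fun x : ℝ => 1 - 1 / (1 + s * x ^ (-(1/z)))) (s ^ (-z)) hsz
  rw [show s ^ z * s ^ (-z) = 1 by rw [← Real.rpow_add hs]; simp] at hscale
  have hcongr : ∀ x ∈ Ioi (s ^ (-z)),
      (1 - 1 / (1 + s * (s ^ z * x) ^ (-(1/z)))) = 1 / (1 + x ^ (1/z)) := by
    intro x hx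
    have hx0 : (0:ℝ) < x := lt_trans hsz' hx
    have hsx : s * (s ^ z * x) ^ (-(1/z)) = x ^ (-(1/z)) := by
      rw [Real.mul_rpow hsz.le hx0.le, ← Real.rpow_mul hs.le,
        show z * -(1/z) = -1 by field_simp, Real.rpow_neg_one, ← mul_assoc,
        mul_inv_cancel₀ hs.ne', one_mul]
    rw [hsx, Real.rpow_neg hx0.le]
    have hy : (0:ℝ) < x ^ (1/z) := Real.rpow_pos_of_pos hx0 _
    rw [eq_div_iff (by positivity)]
    field_simp
    ring
  have hIoi : ∫ x in Ioi (s ^ (-z)), (fun x : ℝ => 1 - 1 / (1 + s * x ^ (-(1/z)))) (s ^ z * x)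
      = ∫ x in Ioi (s ^ (-z)), 1 / (1 + x ^ (1/z)) :=
    setIntegral_congr_fun measurableSet_Ioi hcongr
  rw [hIoi] at hscale
  have hsplit := f_split h1 h2 hsz'
  rw [int_one_add_rpow h1 h2] at hsplit
  have hend : ∫ x in Ioi (s ^ (-z)), 1 / (1 + x ^ (1/z))
      = π * z / Real.sin (π * z) - ∫ t in Ioc (0:ℝ) (s ^ (-z)), 1 / (1 + t ^ (1/z)) := by
    linarith
  rw [hend] at hscale
  have := hscale.symm
  rw [smul_eq_mul] at this
  calc ∫ x in Ioi (1:ℝ), (1 - 1 / (1 + s * x ^ (-(1 / z))))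
      = s ^ z * ((s ^ z)⁻¹ * ∫ x in Ioi (1:ℝ), (1 - 1 / (1 + s * x ^ (-(1 / z))))) := by
        rw [← mul_assoc, mul_inv_cancel₀ hsz.ne', one_mul]
    _ = s ^ z * (Real.pi * z / Real.sin (Real.pi * z) -
        ∫ t in Ioc (0 : ℝ) (s ^ (-z)), 1 / (1 + t ^ (1 / z))) := by rw [← this]
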